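/- For the GL₃ example, the decoration f(t;c₁,c₂,c₃) = c₁ + c₂/c₃ + c₃ + (t₂/t₃)(c₁/c₂ + 1/c₃) + (t₁/t₂)(1/c₁) satisfies f(e₂^d(t;c)) = f(t;c) + (d-1)/φ₂ + (d⁻¹-1)/ε₂ where e₂^d(t;c₁,c₂,c₃) = (t;c₁,d⁻¹c₂,c₃), φ₂ = (t₃/t₂)(c₂/c₁) and ε₂ = c₃/c₂. -/

import Mathlib

def fGL3 {F : Type*} [Field F] (t₁ t₂ t₃ c₁ c₂ c₃ : F) : F :=
  c₁ + c₂ / c₃ + c₃ + (t₂ / t₃) * (c₁ / c₂ + 1 / c₃) + (t₁ / t₂) * (1 / c₁)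

/-- The GL₃ decoration satisfies the decorated-crystal identity for e₂. -/
theorem fGL3_e2 {F : Type*} [Field F] (t₁ t₂ t₃ c₁ c₂ c₃ d : F)
    (ht₁ : t₁ ≠ 0) (ht₂ : t₂ ≠ 0) (ht₃ : t₃ ≠ 0)
    (hc₁ : c₁ ≠ 0) (hc₂ : c₂ ≠ 0) (hc₃ : c₃ ≠ 0) (hd : d ≠ 0) :
    fGL3 t₁ t₂ t₃ c₁ (d⁻¹ * c₂) c₃ =
      fGL3 t₁ t₂ t₃ c₁ c₂ c₃ + (d - 1) / ((t₃ / t₂) * (c₂ / c₁))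
        + (d⁻¹ - 1) / (c₃ / c₂) := by
  unfold fGL3
  rw [← sub_eq_zero]
  field_simp
  ring
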